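/- Let ξ* = (w_1,…,w_N) ∈ Ξ and suppose there is a partition of the index set {1,…,N} into three sets X_1, X_2, X_3 and a real number s such that: (a) w_i = ν_i for i ∈ X_1 and w_i = μ_i for i ∈ X_3; (b) for every i ∈ X_2, ν_i < w_i < μ_i and F_Φ(ξ*; i) = s; and (c) F_Φ(ξ*; u) ≤ s for every u ∈ X_3 and s ≤ F_Φ(ξ*; ℓ) for every ℓ ∈ X_1. Then ξ* is Φ-optimal in Ξ, that is, Φ(ξ*) ≤ Φ(ξ) for every ξ ∈ Ξ. -/
import Mathlib


theorem stmt_3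
    (N : ℕ) (hN : 1 ≤ N)
    (Δ : Set (Fin N → ℝ))
    (hΔ : Δ = {w : Fin N → ℝ | (∀ i, 0 ≤ w i) ∧ ∑ i, w i = 1})
    (Φ : (Fin N → ℝ) → ℝ)
    (hconv : ConvexOn ℝ Δ Φ)
    (F : (Fin N → ℝ) → (Fin N → ℝ) → ℝ)
    (hF : ∀ ξ ∈ Δ, ∀ η ∈ Δ,
      Filter.Tendsto (fun α : ℝ => (Φ ((1 - α) • ξ + α • η) - Φ ξ) / α)
        (nhdsWithin 0 (Set.Ioi 0)) (nhds (F ξ η)))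
    (hlin : ∀ ξ ∈ Δ, ∀ η ∈ Δ, F ξ η = ∑ i, η i * F ξ (Pi.single i 1))
    (ν μ : Fin N → ℝ)
    (hν0 : ∀ i, 0 ≤ ν i) (hνμ : ∀ i, ν i < μ i) (hμ1 : ∀ i, μ i ≤ 1)
    (hνsum : ∑ i, ν i ≤ 1) (hμsum : 1 ≤ ∑ i, μ i)
    (Ξ : Set (Fin N → ℝ))
    (hΞ : Ξ = {w : Fin N → ℝ | w ∈ Δ ∧ ∀ i, ν i ≤ w i ∧ w i ≤ μ i})
    (ξs : Fin N → ℝ) (hmem : ξs ∈ Ξ)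
    (X1 X2 X3 : Set (Fin N))
    (hcover : X1 ∪ X2 ∪ X3 = Set.univ)
    (hd12 : Disjoint X1 X2) (hd13 : Disjoint X1 X3) (hd23 : Disjoint X2 X3)
    (s : ℝ)
    (ha1 : ∀ i ∈ X1, ξs i = ν i)
    (ha3 : ∀ i ∈ X3, ξs i = μ i)
    (hb : ∀ i ∈ X2, (ν i < ξs i ∧ ξs i < μ i) ∧ F ξs (Pi.single i 1) = s)
    (hc3 : ∀ u ∈ X3, F ξs (Pi.single u 1) ≤ s)
    (hc1 : ∀ l ∈ X1, s ≤ F ξs (Pi.single l 1)) :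
    ∀ ξ ∈ Ξ, Φ ξs ≤ Φ ξ := by

  intro ξ hξ
  subst hΔ hΞ
  obtain ⟨hξsΔ, hξsbd⟩ := hmem
  obtain ⟨hξΔ, hξbd⟩ := hξ
  have h0 : F ξs ξs = 0 := by
    have hF0 := hF ξs hξsΔ ξs hξsΔ
    have hconst : Filter.Tendsto (fun α : ℝ => (Φ ((1 - α) • ξs + α • ξs) - Φ ξs) / α)
        (nhdsWithin 0 (Set.Ioi 0)) (nhds 0) := by
      have heq : (fun α : ℝ => (Φ ((1 - α) • ξs + α • ξs) - Φ ξs) / α) = fun _ => 0 := by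
        funext α
        have h1 : (1 - α) • ξs + α • ξs = ξs := by
          funext i; simp [smul_eq_mul]; ring
        rw [h1]; simp
      rw [heq]; exact tendsto_const_nhds
    exact tendsto_nhds_unique hF0 hconst
  have hle : F ξs ξ ≤ Φ ξ - Φ ξs := by
    refine le_of_tendsto (hF ξs hξsΔ ξ hξΔ) ?_
    have h1 : Set.Ioo (0:ℝ) 1 ∈ nhdsWithin (0:ℝ) (Set.Ioi 0) :=
      Ioo_mem_nhdsGT_of_mem (by constructor <;> norm_num)
    filter_upwards [h1] with α hα
    have hΦ := hconv.2 hξsΔ hξΔ (by linarith [hα.2] : (0:ℝ) ≤ 1 - α)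
      (le_of_lt hα.1) (by ring)
    rw [div_le_iff₀ hα.1]
    simp only [smul_eq_mul] at hΦ
    nlinarith [hΦ]
  have hsum0 : ∑ i, ξs i * F ξs (Pi.single i 1) = 0 := by
    rw [← hlin ξs hξsΔ ξs hξsΔ, h0]
  have key : 0 ≤ F ξs ξ := by
    rw [hlin ξs hξsΔ ξ hξΔ]
    have hptw : ∑ i, (ξ i - ξs i) * s ≤ ∑ i, (ξ i - ξs i) * F ξs (Pi.single i 1) := by
      apply Finset.sum_le_sum
      intro i _
      have hi : i ∈ X1 ∪ X2 ∪ X3 := by rw [hcover]; trivial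
      rcases hi with (h1 | h2) | h3
      · have e1 := ha1 i h1; have e2 := hc1 i h1
        have hd : 0 ≤ ξ i - ξs i := by have := (hξbd i).1; linarith
        nlinarith
      · rw [(hb i h2).2]
      · have e1 := ha3 i h3; have e2 := hc3 i h3
        have hd : ξ i - ξs i ≤ 0 := by have := (hξbd i).2; linarith
        nlinarith
    have hsd : ∑ i, (ξ i - ξs i) * s = 0 := by
      rw [← Finset.sum_mul]
      have hz : ∑ i, (ξ i - ξs i) = 0 := by
        rw [Finset.sum_sub_distrib, hξΔ.2, hξsΔ.2]; ring
      rw [hz]; ring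
    have hsplit : ∑ i, (ξ i - ξs i) * F ξs (Pi.single i 1)
        = ∑ i, ξ i * F ξs (Pi.single i 1) - ∑ i, ξs i * F ξs (Pi.single i 1) := by
      rw [← Finset.sum_sub_distrib]
      apply Finset.sum_congr rfl
      intro i _; ring
    rw [hsplit, hsum0] at hptw
    linarith
  linarith
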